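/- arXiv:math/0406465 — 3 statements merged into one kernel-verified Lean document; each statement's English description precedes it below -/
import Mathlib

section
/- Rosenthal's inequality: for independent centered real random variables U₁,…,Uₙ and any p ≥ 2, there is a constant C(p) depending only on p such that E|∑ᵢ Uᵢ|^p ≤ C(p) (∑ᵢ E|Uᵢ|^p + (∑ᵢ E Uᵢ²)^{p/2}). -/
open MeasureTheory ProbabilityTheory

private lemma ros_hasDerivAt_aux {p : ℝ} (hp : 2 ≤ p) {u : ℝ} (hu : u ≠ 0) :
    HasDerivAt (fun v : ℝ => p * |v| ^ (p - 2) * v) (p * (p - 1) * |u| ^ (p - 2)) u := by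
  have habs : |u| ≠ 0 := abs_ne_zero.mpr hu
  have h1 : HasDerivAt (fun v : ℝ => |v| ^ (p - 2))
      ((p - 2) * |u| ^ (p - 2 - 1) * (SignType.sign u : ℝ)) u :=
    (Real.hasDerivAt_rpow_const (p := p - 2) (Or.inl habs)).comp u (hasDerivAt_abs hu)
  have h2 : HasDerivAt (fun v : ℝ => |v| ^ (p - 2) * v)
      ((p - 2) * |u| ^ (p - 2 - 1) * (SignType.sign u : ℝ) * u + |u| ^ (p - 2) * 1) u :=
    h1.mul (hasDerivAt_id u)
  have h3 := h2.const_mul p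
  convert h3 using 1
  · ext v; ring
  · rfl
  · ext v; ring
  have hsu : (SignType.sign u : ℝ) * u = |u| := by
    rcases hu.lt_or_gt with h | h
    · simp [sign_neg h, abs_of_neg h]
    · simp [sign_pos h, abs_of_pos h]
  have h4 : |u| ^ (p - 2 - 1) * |u| = |u| ^ (p - 2) := by
    rw [← Real.rpow_add_one habs (p - 2 - 1)]; ring_nf
  calc p * (p - 1) * |u| ^ (p - 2)
      = p * ((p - 2) * (|u| ^ (p - 2 - 1) * |u|) + |u| ^ (p - 2)) := by rw [h4]; ring
    _ = p * ((p - 2) * |u| ^ (p - 2 - 1) * (SignType.sign u : ℝ) * u + |u| ^ (p - 2) * 1) := by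
        rw [mul_assoc ((p-2) * |u| ^ (p - 2 - 1)) (SignType.sign u : ℝ) u, hsu]; ring

private lemma ros_pointwise {p : ℝ} (hp : 2 ≤ p) (x y : ℝ) :
    |x + y| ^ p ≤ |x| ^ p + p * |x| ^ (p - 2) * x * y
      + (3 ^ p + p * 2 ^ p + p * (p - 1) * 2 ^ p) * (|x| ^ (p - 2) * y ^ 2 + |y| ^ p) := by
  have hp1 : (1 : ℝ) < p := by linarith
  have hp2 : (0 : ℝ) ≤ p - 2 := by linarith
  have h2p : (0 : ℝ) ≤ 2 ^ p := Real.rpow_nonneg (by norm_num) p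
  have hxp2 : (0 : ℝ) ≤ |x| ^ (p - 2) := Real.rpow_nonneg (abs_nonneg x) _
  have hyp : (0 : ℝ) ≤ |y| ^ p := Real.rpow_nonneg (abs_nonneg y) _
  rcases le_or_gt |x| (2 * |y|) with hc | hc
  · -- |x| ≤ 2|y|
    have hxy : |x + y| ^ p ≤ 3 ^ p * |y| ^ p := by
      rw [← Real.mul_rpow (by norm_num) (abs_nonneg y)]
      exact Real.rpow_le_rpow (abs_nonneg _)
        ((abs_add_le x y).trans (by linarith)) (by linarith)
    have hcross : |p * |x| ^ (p - 2) * x * y| ≤ p * 2 ^ p * |y| ^ p := by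
      have e1 : |p * |x| ^ (p - 2) * x * y| = p * (|x| ^ (p - 2) * |x|) * |y| := by
        rw [abs_mul, abs_mul, abs_mul]
        rw [abs_of_nonneg (by linarith : (0:ℝ) ≤ p), abs_of_nonneg hxp2]
        ring
      have e2 : |x| ^ (p - 2) * |x| = |x| ^ (p - 1) := by
        rw [show p - 1 = p - 2 + 1 by ring, Real.rpow_add_one' (abs_nonneg x) (by linarith)]
      have e3 : |x| ^ (p - 1) ≤ (2 * |y|) ^ (p - 1) :=
        Real.rpow_le_rpow (abs_nonneg x) hc (by linarith)
      have e4 : (2 * |y|) ^ (p - 1) = 2 ^ (p - 1) * |y| ^ (p - 1) :=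
        Real.mul_rpow (by norm_num) (abs_nonneg y)
      have e5 : (2:ℝ) ^ (p - 1) ≤ 2 ^ p :=
        Real.rpow_le_rpow_of_exponent_le (by norm_num) (by linarith)
      have e6 : |y| ^ (p - 1) * |y| = |y| ^ p := by
        rw [show p = p - 1 + 1 by ring, Real.rpow_add_one' (abs_nonneg y) (by linarith)]
        ring_nf
      have e7 : |x| ^ (p - 1) ≤ 2 ^ p * |y| ^ (p - 1) := by
        refine e3.trans ?_
        rw [e4]
        exact mul_le_mul_of_nonneg_right e5 (Real.rpow_nonneg (abs_nonneg y) _)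
      have e8 := mul_le_mul_of_nonneg_right
        (mul_le_mul_of_nonneg_left e7 (by linarith : (0:ℝ) ≤ p)) (abs_nonneg y)
      rw [e1, e2]
      calc p * |x| ^ (p - 1) * |y| ≤ p * (2 ^ p * |y| ^ (p - 1)) * |y| := e8
        _ = p * 2 ^ p * (|y| ^ (p - 1) * |y|) := by ring
        _ = p * 2 ^ p * |y| ^ p := by rw [e6]
    have hxpn : (0:ℝ) ≤ |x| ^ p := Real.rpow_nonneg (abs_nonneg x) _
    have h3p' : (0:ℝ) ≤ 3 ^ p := Real.rpow_nonneg (by norm_num) p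
    have hsq : (0:ℝ) ≤ |x| ^ (p - 2) * y ^ 2 := by positivity
    have h5 : -(p * 2 ^ p * |y| ^ p) ≤ p * |x| ^ (p - 2) * x * y := by
      have := neg_abs_le (p * |x| ^ (p - 2) * x * y); linarith
    have hppm : (0:ℝ) ≤ p * (p - 1) * 2 ^ p :=
      mul_nonneg (mul_nonneg (by linarith) (by linarith)) h2p
    have hKt : 3 ^ p * |y| ^ p + p * 2 ^ p * |y| ^ p ≤
        (3 ^ p + p * 2 ^ p + p * (p - 1) * 2 ^ p) * (|x| ^ (p - 2) * y ^ 2 + |y| ^ p) := by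
      nlinarith [mul_nonneg h3p' hsq, mul_nonneg (mul_nonneg (by linarith : (0:ℝ) ≤ p) h2p) hsq,
        mul_nonneg hppm hsq, mul_nonneg hppm hyp]
    linarith [hxy, h5, hKt, hxpn]
  · -- 2|y| < |x|
    have hxne : x ≠ 0 := by
      intro h; rw [h] at hc; simp at hc; linarith [abs_nonneg y, hc]
    have hxpos : 0 < |x| := abs_pos.mpr hxne
    have hne : ∀ t ∈ Set.Icc (0:ℝ) 1, x + t * y ≠ 0 := by
      intro t ht
      have h1 : |t * y| ≤ |y| := by
        rw [abs_mul, abs_of_nonneg ht.1]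
        calc t * |y| ≤ 1 * |y| := mul_le_mul_of_nonneg_right ht.2 (abs_nonneg y)
          _ = |y| := one_mul _
      have h2 : |x| ≤ |x + t * y| + |t * y| := by
        calc |x| = |(x + t * y) + (-(t * y))| := by ring_nf
          _ ≤ |x + t * y| + |-(t * y)| := abs_add_le _ _
          _ = |x + t * y| + |t * y| := by rw [abs_neg]
      intro hz
      rw [hz] at h2; simp at h2
      linarith [abs_nonneg y, abs_mul t y]
    have hub : ∀ t ∈ Set.Icc (0:ℝ) 1, |x + t * y| ^ (p - 2) ≤ 2 ^ p * |x| ^ (p - 2) := by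
      intro t ht
      have h1 : |t * y| ≤ |y| := by
        rw [abs_mul, abs_of_nonneg ht.1]
        calc t * |y| ≤ 1 * |y| := mul_le_mul_of_nonneg_right ht.2 (abs_nonneg y)
          _ = |y| := one_mul _
      have h2 : |x + t * y| ≤ 2 * |x| := by
        calc |x + t * y| ≤ |x| + |t * y| := abs_add_le _ _
          _ ≤ |x| + |y| := by linarith
          _ ≤ 2 * |x| := by linarith
      calc |x + t * y| ^ (p - 2) ≤ (2 * |x|) ^ (p - 2) :=
            Real.rpow_le_rpow (abs_nonneg _) h2 hp2
        _ = 2 ^ (p - 2) * |x| ^ (p - 2) := Real.mul_rpow (by norm_num) (abs_nonneg x)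
        _ ≤ 2 ^ p * |x| ^ (p - 2) := by
            exact mul_le_mul_of_nonneg_right
              (Real.rpow_le_rpow_of_exponent_le (by norm_num) (by linarith)) hxp2
    -- affine map
    have haff : ∀ t : ℝ, HasDerivAt (fun s : ℝ => x + s * y) y t := by
      intro t
      simpa using ((hasDerivAt_id t).mul_const y).const_add x
    set L : ℝ := p * (p - 1) * (2 ^ p * |x| ^ (p - 2)) with hL
    have hLnn : (0:ℝ) ≤ L := by
      rw [hL]; exact mul_nonneg (mul_nonneg (by linarith) (by linarith)) (by positivity)
    -- step 1 : Lipschitz bound for φ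
    set φ : ℝ → ℝ := fun t => p * |x + t * y| ^ (p - 2) * (x + t * y) with hφ
    have hφderiv : ∀ t ∈ Set.Icc (0:ℝ) 1,
        HasDerivWithinAt φ ((p * (p - 1) * |x + t * y| ^ (p - 2)) * y) (Set.Icc 0 1) t := by
      intro t ht
      exact (((ros_hasDerivAt_aux hp (hne t ht)).comp t (haff t))).hasDerivWithinAt
    have hφbound : ∀ t ∈ Set.Icc (0:ℝ) 1,
        ‖(p * (p - 1) * |x + t * y| ^ (p - 2)) * y‖ ≤ L * |y| := by
      intro t ht
      rw [Real.norm_eq_abs, abs_mul, abs_mul, abs_mul]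
      rw [abs_of_nonneg (by linarith : (0:ℝ) ≤ p), abs_of_nonneg (by linarith : (0:ℝ) ≤ p - 1),
        abs_of_nonneg (Real.rpow_nonneg (abs_nonneg _) _)]
      rw [hL]
      have h6 := hub t ht
      have h7 : p * (p - 1) * |x + t * y| ^ (p - 2) ≤ p * (p - 1) * (2 ^ p * |x| ^ (p - 2)) := by
        rw [mul_assoc, mul_assoc]
        exact mul_le_mul_of_nonneg_left (mul_le_mul_of_nonneg_left h6 (by linarith)) (by linarith)
      exact mul_le_mul_of_nonneg_right h7 (abs_nonneg y)
    have hφlip : ∀ t ∈ Set.Icc (0:ℝ) 1, |φ t - φ 0| ≤ L * |y| := by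
      intro t ht
      have h0 : (0:ℝ) ∈ Set.Icc (0:ℝ) 1 := by norm_num
      have := Convex.norm_image_sub_le_of_norm_hasDerivWithin_le hφderiv hφbound
        (convex_Icc 0 1) h0 ht
      rw [Real.norm_eq_abs, Real.norm_eq_abs] at this
      calc |φ t - φ 0| ≤ L * |y| * |t - 0| := this
        _ ≤ L * |y| * 1 := by
            have hLy : 0 ≤ L * |y| := mul_nonneg hLnn (abs_nonneg y)
            have : |t - 0| ≤ 1 := by rw [sub_zero, abs_of_nonneg ht.1]; exact ht.2
            nlinarith
        _ = L * |y| := mul_one _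
    -- step 2
    set h : ℝ → ℝ := fun t => |x + t * y| ^ p - t * (φ 0 * y) with hh
    have hhderiv : ∀ t ∈ Set.Icc (0:ℝ) 1,
        HasDerivWithinAt h (φ t * y - φ 0 * y) (Set.Icc 0 1) t := by
      intro t ht
      have h1 : HasDerivAt (fun s : ℝ => |x + s * y| ^ p) ((p * |x + t * y| ^ (p - 2) * (x + t * y)) * y) t :=
        by have := (hasDerivAt_abs_rpow (x + t * y) hp1).comp t (haff t); exact this
      have h2 : HasDerivAt (fun s : ℝ => s * (φ 0 * y)) (φ 0 * y) t := by
        simpa using (hasDerivAt_id t).mul_const (φ 0 * y)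
      exact ((h1.sub h2)).hasDerivWithinAt
    have hhbound : ∀ t ∈ Set.Icc (0:ℝ) 1, ‖φ t * y - φ 0 * y‖ ≤ (L * |y|) * |y| := by
      intro t ht
      rw [Real.norm_eq_abs, ← sub_mul, abs_mul]
      exact mul_le_mul_of_nonneg_right (hφlip t ht) (abs_nonneg y)
    have hkey : |h 1 - h 0| ≤ (L * |y|) * |y| := by
      have h0 : (0:ℝ) ∈ Set.Icc (0:ℝ) 1 := by norm_num
      have h1 : (1:ℝ) ∈ Set.Icc (0:ℝ) 1 := by norm_num
      have := Convex.norm_image_sub_le_of_norm_hasDerivWithin_le hhderiv hhbound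
        (convex_Icc 0 1) h0 h1
      rw [Real.norm_eq_abs, Real.norm_eq_abs] at this
      simpa using this
    have hφ0 : φ 0 = p * |x| ^ (p - 2) * x := by simp [hφ]
    have hh1 : h 1 - h 0 = |x + y| ^ p - |x| ^ p - p * |x| ^ (p - 2) * x * y := by
      simp only [hh, hφ0]
      ring_nf
    have hLyy : (L * |y|) * |y| = L * y ^ 2 := by
      rw [mul_assoc, abs_mul_abs_self]; ring
    rw [hh1, hLyy] at hkey
    have hfin : |x + y| ^ p - |x| ^ p - p * |x| ^ (p - 2) * x * y ≤ L * y ^ 2 :=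
      (le_abs_self _).trans hkey
    have hLle : L * y ^ 2 ≤ (3 ^ p + p * 2 ^ p + p * (p - 1) * 2 ^ p) * (|x| ^ (p - 2) * y ^ 2 + |y| ^ p) := by
      have h3p : (0:ℝ) ≤ 3 ^ p := Real.rpow_nonneg (by norm_num) p
      have hy2 : (0:ℝ) ≤ y ^ 2 := sq_nonneg y
      rw [hL]
      nlinarith [mul_nonneg (mul_nonneg (mul_nonneg (by linarith : (0:ℝ) ≤ p) (by linarith : (0:ℝ) ≤ p - 1)) h2p) hyp,
        mul_nonneg h3p (mul_nonneg hxp2 hy2), mul_nonneg h3p hyp,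
        mul_nonneg (mul_nonneg (by linarith : (0:ℝ) ≤ p) h2p) (mul_nonneg hxp2 hy2),
        mul_nonneg (mul_nonneg (by linarith : (0:ℝ) ≤ p) h2p) hyp]
    linarith

private lemma ros_lyapunov {Ω : Type} [MeasurableSpace Ω] (μ : Measure Ω) [IsProbabilityMeasure μ]
    {f : Ω → ℝ} {q p : ℝ} (hq : 0 < q) (hqp : q ≤ p) (hf : MemLp f (ENNReal.ofReal p) μ) :
    ∫ ω, |f ω| ^ q ∂μ ≤ (∫ ω, |f ω| ^ p ∂μ) ^ (q / p) := by
  have hp : 0 < p := hq.trans_le hqp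
  have hfq : MemLp f (ENNReal.ofReal q) μ :=
    hf.mono_exponent (ENNReal.ofReal_le_ofReal hqp)
  have e1 : eLpNorm f (ENNReal.ofReal q) μ
      = ENNReal.ofReal ((∫ a, ‖f a‖ ^ q ∂μ) ^ q⁻¹) := by
    have := hfq.eLpNorm_eq_integral_rpow_norm (by simp [ENNReal.ofReal_eq_zero, not_le, hq]) (by simp)
    rwa [ENNReal.toReal_ofReal hq.le] at this
  have e2 : eLpNorm f (ENNReal.ofReal p) μ
      = ENNReal.ofReal ((∫ a, ‖f a‖ ^ p ∂μ) ^ p⁻¹) := by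
    have := hf.eLpNorm_eq_integral_rpow_norm (by simp [ENNReal.ofReal_eq_zero, not_le, hp]) (by simp)
    rwa [ENNReal.toReal_ofReal hp.le] at this
  have mono := eLpNorm_le_eLpNorm_of_exponent_le (ENNReal.ofReal_le_ofReal hqp) hf.1
  rw [e1, e2] at mono
  have hB : 0 ≤ ∫ a, ‖f a‖ ^ q ∂μ := integral_nonneg fun a => by positivity
  have hA : 0 ≤ ∫ a, ‖f a‖ ^ p ∂μ := integral_nonneg fun a => by positivity
  have key : (∫ a, ‖f a‖ ^ q ∂μ) ^ q⁻¹ ≤ (∫ a, ‖f a‖ ^ p ∂μ) ^ p⁻¹ :=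
    (ENNReal.ofReal_le_ofReal_iff (by positivity)).1 mono
  have step : (∫ a, ‖f a‖ ^ q ∂μ) ≤ (∫ a, ‖f a‖ ^ p ∂μ) ^ (q / p) := by
    calc (∫ a, ‖f a‖ ^ q ∂μ) = ((∫ a, ‖f a‖ ^ q ∂μ) ^ q⁻¹) ^ q := by
          rw [← Real.rpow_mul hB, inv_mul_cancel₀ hq.ne', Real.rpow_one]
      _ ≤ ((∫ a, ‖f a‖ ^ p ∂μ) ^ p⁻¹) ^ q :=
          Real.rpow_le_rpow (Real.rpow_nonneg hB _) key hq.le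
      _ = (∫ a, ‖f a‖ ^ p ∂μ) ^ (q / p) := by
          rw [← Real.rpow_mul hA]; ring_nf
  simpa [Real.norm_eq_abs] using step

private lemma ros_iIndepFun_congr {Ω : Type} [MeasurableSpace Ω] {μ : Measure Ω} {n : ℕ}
    {f g : Fin n → Ω → ℝ}
    (hf : iIndepFun f μ) (h : ∀ i, f i =ᵐ[μ] g i) :
    iIndepFun g μ := by
  rw [iIndepFun_iff_measure_inter_preimage_eq_mul] at hf ⊢
  intro S sets hsets
  have hae : ∀ᵐ ω ∂μ, ∀ i ∈ S, f i ω = g i ω :=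
    (ae_ball_iff S.countable_toSet).2 fun i _ => h i
  have h2 : (⋂ i ∈ S, g i ⁻¹' sets i) =ᵐ[μ] (⋂ i ∈ S, f i ⁻¹' sets i) := by
    filter_upwards [hae] with ω hω
    show (ω ∈ ⋂ i ∈ S, g i ⁻¹' sets i) = (ω ∈ ⋂ i ∈ S, f i ⁻¹' sets i)
    rw [eq_iff_iff]
    simp only [Set.mem_iInter, Set.mem_preimage]
    exact ⟨fun H i hi => by rw [hω i hi]; exact H i hi,
      fun H i hi => by rw [← hω i hi]; exact H i hi⟩
  have h1 : ∀ i ∈ S, μ (g i ⁻¹' sets i) = μ (f i ⁻¹' sets i) := by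
    intro i hi
    refine measure_congr ?_
    filter_upwards [h i] with ω hω
    show (ω ∈ g i ⁻¹' sets i) = (ω ∈ f i ⁻¹' sets i)
    rw [eq_iff_iff]
    simp only [Set.mem_preimage, hω]
  rw [measure_congr h2, hf S hsets]
  exact Finset.prod_congr rfl fun i hi => (h1 i hi).symm

private noncomputable def rosK (p : ℝ) : ℝ := 3 ^ p + p * 2 ^ p + p * (p - 1) * 2 ^ p

private lemma rosK_nonneg {p : ℝ} (hp : 2 ≤ p) : 0 ≤ rosK p := by
  have h2p : (0:ℝ) ≤ 2 ^ p := Real.rpow_nonneg (by norm_num) p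
  have h3p : (0:ℝ) ≤ 3 ^ p := Real.rpow_nonneg (by norm_num) p
  have := mul_nonneg (mul_nonneg (by linarith : (0:ℝ) ≤ p) (by linarith : (0:ℝ) ≤ p - 1)) h2p
  have := mul_nonneg (by linarith : (0:ℝ) ≤ p) h2p
  unfold rosK; linarith

private lemma ros_step {p : ℝ} (hp : 2 ≤ p) {Ω : Type} [MeasurableSpace Ω] {μ : Measure Ω}
    [IsProbabilityMeasure μ] {X Y : Ω → ℝ} (hXm : Measurable X) (hYm : Measurable Y)
    (hX : MemLp X (ENNReal.ofReal p) μ) (hY : MemLp Y (ENNReal.ofReal p) μ)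
    (hind : IndepFun X Y μ) (hY0 : ∫ ω, Y ω ∂μ = 0) :
    ∫ ω, |X ω + Y ω| ^ p ∂μ ≤ ∫ ω, |X ω| ^ p ∂μ
      + rosK p * ((∫ ω, |X ω| ^ p ∂μ) ^ ((p - 2) / p) * (∫ ω, (Y ω) ^ 2 ∂μ)
        + ∫ ω, |Y ω| ^ p ∂μ) := by
  have hp0 : (0:ℝ) < p := by linarith
  have hp2 : (0:ℝ) ≤ p - 2 := by linarith
  have hpne : ENNReal.ofReal p ≠ 0 := by simp [ENNReal.ofReal_eq_zero, not_le]; linarith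
  have hptop : ENNReal.ofReal p ≠ ⊤ := ENNReal.ofReal_ne_top
  have htor : (ENNReal.ofReal p).toReal = p := ENNReal.toReal_ofReal hp0.le
  -- integrability of basic pieces
  have hIXp : Integrable (fun ω => |X ω| ^ p) μ := by
    simpa [Real.norm_eq_abs, htor] using hX.integrable_norm_rpow hpne hptop
  have hIYp : Integrable (fun ω => |Y ω| ^ p) μ := by
    simpa [Real.norm_eq_abs, htor] using hY.integrable_norm_rpow hpne hptop
  have hILHS : Integrable (fun ω => |X ω + Y ω| ^ p) μ := by
    simpa [Real.norm_eq_abs, htor] using (hX.add hY).integrable_norm_rpow hpne hptop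
  have hg2c : Continuous fun u : ℝ => |u| ^ (p - 2) :=
    (Real.continuous_rpow_const hp2).comp continuous_abs
  have hg2m : Measurable fun u : ℝ => |u| ^ (p - 2) := hg2c.measurable
  have hgm : Measurable fun u : ℝ => |u| ^ (p - 2) * u := hg2m.mul measurable_id
  have hbnd : ∀ u : ℝ, |u| ^ (p - 2) ≤ 1 + |u| ^ p := by
    intro u
    have hup : (0:ℝ) ≤ |u| ^ p := Real.rpow_nonneg (abs_nonneg u) _
    rcases le_or_gt |u| 1 with h | h
    · have := Real.rpow_le_one (abs_nonneg u) h hp2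
      linarith
    · have := Real.rpow_le_rpow_of_exponent_le h.le (by linarith : p - 2 ≤ p)
      linarith
  have hbnd1 : ∀ u : ℝ, |(|u| ^ (p - 2) * u)| ≤ 1 + |u| ^ p := by
    intro u
    have hup : (0:ℝ) ≤ |u| ^ p := Real.rpow_nonneg (abs_nonneg u) _
    have e : |(|u| ^ (p - 2) * u)| = |u| ^ (p - 1) := by
      rw [abs_mul, abs_of_nonneg (Real.rpow_nonneg (abs_nonneg u) _),
        show p - 1 = p - 2 + 1 by ring, Real.rpow_add_one' (abs_nonneg u) (by linarith)]
    rw [e]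
    rcases le_or_gt |u| 1 with h | h
    · have := Real.rpow_le_one (abs_nonneg u) h (by linarith : (0:ℝ) ≤ p - 1)
      linarith
    · have := Real.rpow_le_rpow_of_exponent_le h.le (by linarith : p - 1 ≤ p)
      linarith
  have hIX2 : Integrable (fun ω => |X ω| ^ (p - 2)) μ := by
    refine Integrable.mono' ((integrable_const 1).add hIXp)
      ((hg2m.comp hXm).aestronglyMeasurable) (ae_of_all _ fun ω => ?_)
    rw [Real.norm_eq_abs, abs_of_nonneg (Real.rpow_nonneg (abs_nonneg _) _)]
    exact hbnd (X ω)
  have hIW : Integrable (fun ω => |X ω| ^ (p - 2) * X ω) μ := by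
    refine Integrable.mono' ((integrable_const 1).add hIXp)
      ((hgm.comp hXm).aestronglyMeasurable) (ae_of_all _ fun ω => ?_)
    rw [Real.norm_eq_abs]
    exact hbnd1 (X ω)
  have hIY : Integrable Y μ := hY.integrable (by
    rw [ENNReal.one_le_ofReal]; linarith)
  have hY2 : MemLp Y 2 μ := hY.mono_exponent (by
    rw [show (2 : ENNReal) = ENNReal.ofReal 2 by norm_num]
    exact ENNReal.ofReal_le_ofReal hp)
  have hIY2 : Integrable (fun ω => Y ω ^ 2) μ := hY2.integrable_sq
  -- independence of composed functions
  have hiW : IndepFun (fun ω => |X ω| ^ (p - 2) * X ω) Y μ := by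
    have := hind.comp hgm measurable_id
    exact this
  have hi2 : IndepFun (fun ω => |X ω| ^ (p - 2)) (fun ω => Y ω ^ 2) μ := by
    have := hind.comp hg2m (measurable_id.pow_const 2)
    exact this
  have hIWY : Integrable (fun ω => (|X ω| ^ (p - 2) * X ω) * Y ω) μ :=
    hiW.integrable_mul hIW hIY
  have hI2Y2 : Integrable (fun ω => |X ω| ^ (p - 2) * Y ω ^ 2) μ :=
    hi2.integrable_mul hIX2 hIY2
  -- values of the independent products
  have hEWY : ∫ ω, (|X ω| ^ (p - 2) * X ω) * Y ω ∂μ = 0 := by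
    have h := hiW.integral_fun_mul_eq_mul_integral ((hgm.comp hXm).aestronglyMeasurable)
      hYm.aestronglyMeasurable
    calc ∫ ω, (|X ω| ^ (p - 2) * X ω) * Y ω ∂μ
        = (∫ ω, |X ω| ^ (p - 2) * X ω ∂μ) * ∫ ω, Y ω ∂μ := h
      _ = 0 := by rw [hY0, mul_zero]
  have hE2 : ∫ ω, |X ω| ^ (p - 2) * Y ω ^ 2 ∂μ
      = (∫ ω, |X ω| ^ (p - 2) ∂μ) * ∫ ω, Y ω ^ 2 ∂μ := by
    exact hi2.integral_fun_mul_eq_mul_integral ((hg2m.comp hXm).aestronglyMeasurable)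
      ((hYm.pow_const 2).aestronglyMeasurable)
  -- integrate the pointwise inequality
  have key : ∀ ω, |X ω + Y ω| ^ p ≤ |X ω| ^ p + p * ((|X ω| ^ (p - 2) * X ω) * Y ω)
      + rosK p * (|X ω| ^ (p - 2) * Y ω ^ 2 + |Y ω| ^ p) := by
    intro ω
    have h := ros_pointwise hp (X ω) (Y ω)
    rw [show p * |X ω| ^ (p - 2) * X ω * Y ω
      = p * ((|X ω| ^ (p - 2) * X ω) * Y ω) by ring] at h
    exact h
  have hRHS : Integrable (fun ω => |X ω| ^ p + p * ((|X ω| ^ (p - 2) * X ω) * Y ω)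
      + rosK p * (|X ω| ^ (p - 2) * Y ω ^ 2 + |Y ω| ^ p)) μ :=
    (hIXp.add (hIWY.const_mul p)).add ((hI2Y2.add hIYp).const_mul (rosK p))
  have hmono := integral_mono hILHS hRHS key
  have hsplit : ∫ ω, (|X ω| ^ p + p * ((|X ω| ^ (p - 2) * X ω) * Y ω)
      + rosK p * (|X ω| ^ (p - 2) * Y ω ^ 2 + |Y ω| ^ p)) ∂μ
      = ∫ ω, |X ω| ^ p ∂μ
        + rosK p * ((∫ ω, |X ω| ^ (p - 2) ∂μ) * (∫ ω, Y ω ^ 2 ∂μ) + ∫ ω, |Y ω| ^ p ∂μ) := by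
    have hI2' : Integrable (fun ω => p * ((|X ω| ^ (p - 2) * X ω) * Y ω)) μ :=
      hIWY.const_mul p
    have hI12 : Integrable (fun ω => |X ω| ^ p + p * ((|X ω| ^ (p - 2) * X ω) * Y ω)) μ :=
      hIXp.add hI2'
    have hI34 : Integrable (fun ω => |X ω| ^ (p - 2) * Y ω ^ 2 + |Y ω| ^ p) μ :=
      hI2Y2.add hIYp
    have hI3 : Integrable (fun ω => rosK p * (|X ω| ^ (p - 2) * Y ω ^ 2 + |Y ω| ^ p)) μ :=
      hI34.const_mul (rosK p)
    rw [integral_add hI12 hI3, integral_add hIXp hI2', integral_const_mul, integral_const_mul,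
      integral_add hI2Y2 hIYp, hEWY, hE2]
    ring
  rw [hsplit] at hmono
  -- Lyapunov bound
  have hlyap : ∫ ω, |X ω| ^ (p - 2) ∂μ ≤ (∫ ω, |X ω| ^ p ∂μ) ^ ((p - 2) / p) := by
    rcases eq_or_lt_of_le hp with hpe | hpl
    · subst hpe
      norm_num
    · exact ros_lyapunov μ (by linarith) (by linarith) hX
  have hY2nn : 0 ≤ ∫ ω, Y ω ^ 2 ∂μ := integral_nonneg fun ω => sq_nonneg _
  have hmul := mul_le_mul_of_nonneg_right hlyap hY2nn
  have hK := rosK_nonneg hp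
  nlinarith [hmono, hmul]


/-- Rosenthal's inequality: for any p ≥ 2 there is a constant C(p) such that for
independent centered real random variables U₁,…,Uₙ,
E|∑ᵢ Uᵢ|^p ≤ C(p) (∑ᵢ E|Uᵢ|^p + (∑ᵢ E Uᵢ²)^{p/2}). -/
theorem rosenthal_inequality (p : ℝ) (hp : 2 ≤ p) :
    ∃ C : ℝ, 0 < C ∧
      ∀ (Ω : Type) (_ : MeasurableSpace Ω) (μ : Measure Ω) (_ : IsProbabilityMeasure μ)
        (n : ℕ) (U : Fin n → Ω → ℝ),
        iIndepFun U μ →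
        (∀ i, MemLp (U i) (ENNReal.ofReal p) μ) →
        (∀ i, ∫ ω, U i ω ∂μ = 0) →
        ∫ ω, |∑ i, U i ω| ^ p ∂μ ≤
          C * ((∑ i, ∫ ω, |U i ω| ^ p ∂μ) + (∑ i, ∫ ω, (U i ω) ^ 2 ∂μ) ^ (p / 2)) := by
  classical
  have hp0 : (0:ℝ) < p := by linarith
  have hp2 : (0:ℝ) ≤ p - 2 := by linarith
  have hK : 0 < rosK p := by
    have h3p : (0:ℝ) < 3 ^ p := Real.rpow_pos_of_pos (by norm_num) p
    have h2p : (0:ℝ) ≤ 2 ^ p := Real.rpow_nonneg (by norm_num) p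
    have := mul_nonneg (mul_nonneg (by linarith : (0:ℝ) ≤ p) (by linarith : (0:ℝ) ≤ p - 1)) h2p
    have := mul_nonneg (by linarith : (0:ℝ) ≤ p) h2p
    unfold rosK; linarith
  refine ⟨(2 * rosK p) ^ (p / 2) + 2 * rosK p, by positivity, ?_⟩
  intro Ω mΩ μ hprob n U hindep hLp hmean
  -- measurable modifications
  set V : Fin n → Ω → ℝ := fun i => (hLp i).1.mk (U i) with hV
  have hVm : ∀ i, Measurable (V i) := fun i => (hLp i).1.stronglyMeasurable_mk.measurable
  have hVeq : ∀ i, U i =ᵐ[μ] V i := fun i => (hLp i).1.ae_eq_mk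
  have hVindep := ros_iIndepFun_congr hindep hVeq
  have hVLp : ∀ i, MemLp (V i) (ENNReal.ofReal p) μ := fun i => (hLp i).ae_eq (hVeq i)
  have hVmean : ∀ i, ∫ ω, V i ω ∂μ = 0 := fun i => by
    rw [← integral_congr_ae (hVeq i)]; exact hmean i
  -- rewrite the goal in terms of V
  have hgoalL : ∫ ω, |∑ i, U i ω| ^ p ∂μ = ∫ ω, |∑ i, V i ω| ^ p ∂μ := by
    refine integral_congr_ae ?_
    have hall : ∀ᵐ ω ∂μ, ∀ i, U i ω = V i ω := ae_all_iff.2 fun i => hVeq i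
    filter_upwards [hall] with ω hω
    rw [show ∑ i, U i ω = ∑ i, V i ω from Finset.sum_congr rfl fun i _ => hω i]
  have hgoalm : ∀ i, ∫ ω, |U i ω| ^ p ∂μ = ∫ ω, |V i ω| ^ p ∂μ := fun i =>
    integral_congr_ae ((hVeq i).mono fun ω h => congrArg (fun t : ℝ => |t| ^ p) h)
  have hgoalv : ∀ i, ∫ ω, (U i ω) ^ 2 ∂μ = ∫ ω, (V i ω) ^ 2 ∂μ := fun i =>
    integral_congr_ae ((hVeq i).mono fun ω h => congrArg (fun t : ℝ => t ^ 2) h)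
  rw [hgoalL, Finset.sum_congr rfl fun i _ => hgoalm i,
    Finset.sum_congr rfl fun i _ => hgoalv i]
  -- partial sums
  set A : ℕ → Finset (Fin n) := fun k => Finset.univ.filter (fun i : Fin n => (i : ℕ) < k)
    with hA
  set S : ℕ → Ω → ℝ := fun k ω => ∑ i ∈ A k, V i ω with hS
  set a : ℕ → ℝ := fun k => ∫ ω, |S k ω| ^ p ∂μ with ha
  set b : ℝ := ∑ i, ∫ ω, (V i ω) ^ 2 ∂μ with hb
  set c : ℝ := ∑ i, ∫ ω, |V i ω| ^ p ∂μ with hc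
  have hAn : A n = Finset.univ := by
    ext i; simp [hA, i.isLt]
  have hA0 : A 0 = ∅ := by ext i; simp [hA]
  have hAins : ∀ k, ∀ hk : k < n, A (k + 1) = insert ⟨k, hk⟩ (A k) := by
    intro k hk
    ext i
    simp only [hA, Finset.mem_filter, Finset.mem_univ, true_and, Finset.mem_insert,
      Fin.ext_iff, Nat.lt_succ_iff_lt_or_eq]
    tauto
  have hnotmem : ∀ k, ∀ hk : k < n, (⟨k, hk⟩ : Fin n) ∉ A k := by
    intro k hk; simp [hA]
  have ha_nonneg : ∀ k, 0 ≤ a k := fun k =>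
    integral_nonneg fun ω => Real.rpow_nonneg (abs_nonneg _) _
  have hvnn : ∀ i : Fin n, 0 ≤ ∫ ω, (V i ω) ^ 2 ∂μ := fun i =>
    integral_nonneg fun ω => sq_nonneg _
  have hmnn : ∀ i : Fin n, 0 ≤ ∫ ω, |V i ω| ^ p ∂μ := fun i =>
    integral_nonneg fun ω => Real.rpow_nonneg (abs_nonneg _) _
  -- one-step recursion
  have hstep : ∀ k, ∀ hk : k < n, a (k + 1) ≤ a k
      + rosK p * ((a k) ^ ((p - 2) / p) * (∫ ω, (V ⟨k, hk⟩ ω) ^ 2 ∂μ)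
        + ∫ ω, |V ⟨k, hk⟩ ω| ^ p ∂μ) := by
    intro k hk
    have hXm : Measurable (S k) := Finset.measurable_sum _ fun i _ => hVm i
    have hXLp : MemLp (S k) (ENNReal.ofReal p) μ := by
      rw [hS]
      exact memLp_finset_sum (A k) fun i _ => hVLp i
    have hind' : IndepFun (S k) (V ⟨k, hk⟩) μ := by
      have h := hVindep.indepFun_finset_sum_of_notMem hVm (hnotmem k hk)
      have he : (∑ j ∈ A k, V j) = S k := by
        funext ω; rw [hS]; simp [Finset.sum_apply]
      rwa [he] at h
    have hstep' := ros_step hp hXm (hVm _) hXLp (hVLp _) hind' (hVmean _)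
    have hrw : ∀ ω, S (k + 1) ω = S k ω + V ⟨k, hk⟩ ω := by
      intro ω
      rw [hS]
      simp only
      rw [hAins k hk, Finset.sum_insert (hnotmem k hk)]
      ring
    have hae : a (k + 1) = ∫ ω, |S k ω + V ⟨k, hk⟩ ω| ^ p ∂μ := by
      rw [ha]
      simp only
      exact integral_congr_ae (ae_of_all _ fun ω => congrArg (fun t : ℝ => |t| ^ p) (hrw ω))
    rw [hae]
    exact hstep'
  -- the maximum of the a k
  have hne : (Finset.range (n + 1)).Nonempty := Finset.nonempty_range_iff.mpr (Nat.succ_ne_zero n)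
  set M : ℝ := (Finset.range (n + 1)).sup' hne a with hM
  have hMge : ∀ k, k ≤ n → a k ≤ M := fun k hk =>
    Finset.le_sup' a (Finset.mem_range.mpr (by omega))
  have hM0 : 0 ≤ M := (ha_nonneg 0).trans (hMge 0 (by omega))
  have hθnn : 0 ≤ (p - 2) / p := div_nonneg hp2 hp0.le
  -- telescoping
  have htel : ∀ k, k ≤ n → a k ≤ rosK p * (M ^ ((p - 2) / p)
      * (∑ i ∈ A k, ∫ ω, (V i ω) ^ 2 ∂μ) + ∑ i ∈ A k, ∫ ω, |V i ω| ^ p ∂μ) := by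
    intro k
    induction k with
    | zero =>
      intro _
      have ha0 : a 0 = 0 := by
        rw [ha]
        simp only
        have : ∀ ω, |S 0 ω| ^ p = 0 := by
          intro ω
          rw [hS]
          simp only [hA0, Finset.sum_empty, abs_zero]
          exact Real.zero_rpow hp0.ne'
        rw [integral_congr_ae (ae_of_all _ fun ω => this ω), integral_zero]
      rw [ha0, hA0]
      simp
    | succ k ih =>
      intro hk1
      have hk : k < n := by omega
      have h1 := hstep k hk
      have h2 := ih (by omega)
      have h3 : (a k) ^ ((p - 2) / p) ≤ M ^ ((p - 2) / p) :=
        Real.rpow_le_rpow (ha_nonneg k) (hMge k (by omega)) hθnn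
      have hv := hvnn ⟨k, hk⟩
      have hm := hmnn ⟨k, hk⟩
      have hKnn := rosK_nonneg hp
      rw [hAins k hk, Finset.sum_insert (hnotmem k hk), Finset.sum_insert (hnotmem k hk)]
      have h4 : (a k) ^ ((p - 2) / p) * (∫ ω, (V ⟨k, hk⟩ ω) ^ 2 ∂μ)
          ≤ M ^ ((p - 2) / p) * (∫ ω, (V ⟨k, hk⟩ ω) ^ 2 ∂μ) :=
        mul_le_mul_of_nonneg_right h3 hv
      have h5 : rosK p * ((a k) ^ ((p - 2) / p) * (∫ ω, (V ⟨k, hk⟩ ω) ^ 2 ∂μ)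
          + ∫ ω, |V ⟨k, hk⟩ ω| ^ p ∂μ)
          ≤ rosK p * (M ^ ((p - 2) / p) * (∫ ω, (V ⟨k, hk⟩ ω) ^ 2 ∂μ)
          + ∫ ω, |V ⟨k, hk⟩ ω| ^ p ∂μ) :=
        mul_le_mul_of_nonneg_left (by linarith) hKnn
      have hring : rosK p * (M ^ ((p - 2) / p) * ((∫ ω, (V ⟨k, hk⟩ ω) ^ 2 ∂μ)
            + ∑ i ∈ A k, ∫ ω, (V i ω) ^ 2 ∂μ)
            + ((∫ ω, |V ⟨k, hk⟩ ω| ^ p ∂μ) + ∑ i ∈ A k, ∫ ω, |V i ω| ^ p ∂μ))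
          = rosK p * (M ^ ((p - 2) / p) * (∑ i ∈ A k, ∫ ω, (V i ω) ^ 2 ∂μ)
            + ∑ i ∈ A k, ∫ ω, |V i ω| ^ p ∂μ)
          + rosK p * (M ^ ((p - 2) / p) * (∫ ω, (V ⟨k, hk⟩ ω) ^ 2 ∂μ)
            + ∫ ω, |V ⟨k, hk⟩ ω| ^ p ∂μ) := by ring
      linarith
  -- bound on M
  have hbsub : ∀ k, (∑ i ∈ A k, ∫ ω, (V i ω) ^ 2 ∂μ) ≤ b := by
    intro k
    rw [hb]
    exact Finset.sum_le_sum_of_subset_of_nonneg (Finset.subset_univ _) fun i _ _ => hvnn i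
  have hcsub : ∀ k, (∑ i ∈ A k, ∫ ω, |V i ω| ^ p ∂μ) ≤ c := by
    intro k
    rw [hc]
    exact Finset.sum_le_sum_of_subset_of_nonneg (Finset.subset_univ _) fun i _ _ => hmnn i
  have hbnn : 0 ≤ b := (Finset.sum_nonneg fun i _ => hvnn i)
  have hcnn : 0 ≤ c := (Finset.sum_nonneg fun i _ => hmnn i)
  have hKnn := rosK_nonneg hp
  have hMθnn : 0 ≤ M ^ ((p - 2) / p) := Real.rpow_nonneg hM0 _
  have hMle : M ≤ rosK p * (M ^ ((p - 2) / p) * b + c) := by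
    obtain ⟨k₀, hk₀mem, hMk⟩ := Finset.exists_mem_eq_sup' hne a
    have hk₀le : k₀ ≤ n := Nat.lt_succ_iff.mp (Finset.mem_range.mp hk₀mem)
    have hMak : M = a k₀ := by rw [hM, hMk]
    calc M = a k₀ := hMak
      _ ≤ rosK p * (M ^ ((p - 2) / p) * (∑ i ∈ A k₀, ∫ ω, (V i ω) ^ 2 ∂μ)
            + ∑ i ∈ A k₀, ∫ ω, |V i ω| ^ p ∂μ) := htel k₀ hk₀le
      _ ≤ rosK p * (M ^ ((p - 2) / p) * b + c) :=
          mul_le_mul_of_nonneg_left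
            (add_le_add (mul_le_mul_of_nonneg_left (hbsub k₀) hMθnn) (hcsub k₀)) hKnn
  -- relate the goal to a n
  have han : a n ≤ M := hMge n le_rfl
  have hgoal_an : ∫ ω, |∑ i, V i ω| ^ p ∂μ = a n := by
    rw [ha]
    simp only
    refine integral_congr_ae (ae_of_all _ fun ω => ?_)
    have hSn : (∑ i, V i ω) = S n ω := by
      rw [hS]
      exact (Finset.sum_congr hAn fun _ _ => rfl).symm
    exact congrArg (fun t : ℝ => |t| ^ p) hSn
  rw [hgoal_an]
  -- solve the implicit inequality for M
  have h2Knn : (0:ℝ) ≤ 2 * rosK p := by linarith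
  have h2Kp : (0:ℝ) ≤ (2 * rosK p) ^ (p / 2) := Real.rpow_nonneg h2Knn _
  have hbp : (0:ℝ) ≤ b ^ (p / 2) := Real.rpow_nonneg hbnn _
  rcases le_or_gt M 0 with hM0' | hMpos
  · have h1 : a n ≤ 0 := le_trans han hM0'
    nlinarith [mul_nonneg h2Kp hcnn, mul_nonneg h2Kp hbp, mul_nonneg h2Knn hcnn,
      mul_nonneg h2Knn hbp]
  · rcases le_total (rosK p * (M ^ ((p - 2) / p) * b)) (rosK p * c) with h1 | h1
    · have hexp : rosK p * (M ^ ((p - 2) / p) * b + c)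
          = rosK p * (M ^ ((p - 2) / p) * b) + rosK p * c := by ring
      have hM2 : M ≤ 2 * rosK p * c := by
        have : rosK p * c + rosK p * c = 2 * rosK p * c := by ring
        linarith [hMle]
      nlinarith [mul_nonneg h2Kp hcnn, mul_nonneg h2Kp hbp, mul_nonneg h2Knn hbp]
    · have hexp : rosK p * (M ^ ((p - 2) / p) * b + c)
          = rosK p * (M ^ ((p - 2) / p) * b) + rosK p * c := by ring
      have hM2 : M ≤ 2 * (rosK p * (M ^ ((p - 2) / p) * b)) := by linarith [hMle]
      have hMθpos : 0 < M ^ ((p - 2) / p) := Real.rpow_pos_of_pos hMpos _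
      have hsplitM : M ^ ((p - 2) / p) * M ^ (2 / p) = M := by
        rw [← Real.rpow_add hMpos, show (p - 2) / p + 2 / p = 1 by field_simp; ring, Real.rpow_one]
      have hcancel : M ^ (2 / p) ≤ 2 * rosK p * b := by
        have hr : 2 * (rosK p * (M ^ ((p - 2) / p) * b))
            = M ^ ((p - 2) / p) * (2 * rosK p * b) := by ring
        have h3 : M ^ ((p - 2) / p) * M ^ (2 / p) ≤ M ^ ((p - 2) / p) * (2 * rosK p * b) := by
          rw [hsplitM]
          linarith [hM2]
        exact le_of_mul_le_mul_left h3 hMθpos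
      have hM3 : M ≤ (2 * rosK p * b) ^ (p / 2) := by
        have e1 : M = (M ^ (2 / p)) ^ (p / 2) := by
          rw [← Real.rpow_mul hMpos.le, show 2 / p * (p / 2) = 1 by field_simp, Real.rpow_one]
        rw [e1]
        exact Real.rpow_le_rpow (Real.rpow_nonneg hMpos.le _) hcancel (by positivity)
      have e2 : (2 * rosK p * b) ^ (p / 2) = (2 * rosK p) ^ (p / 2) * b ^ (p / 2) :=
        Real.mul_rpow h2Knn hbnn
      nlinarith [mul_nonneg h2Kp hcnn, mul_nonneg h2Knn hcnn, mul_nonneg h2Knn hbp]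
end

section
/- For any vectors w, u, v, s in an inner product space with norm ‖·‖, if Pu denotes the orthogonal projection of s onto a subspace containing v, then 2⟨w, v − s⟩ − ‖s − v‖² ≤ ‖Qw‖² + ⟨w, (Ps − s)/‖Ps − s‖⟩², where Q is the orthogonal projection onto the subspace; in particular, 2⟨w, v − s⟩ − ‖s − v‖² ≤ ‖Qw‖² + ‖w − Qw‖²·0 + (⟨w, e⟩)² for the unit vector e = (Ps − s)/‖Ps − s‖ (assuming Ps ≠ s). -/
open RealInnerProductSpace

/-- For v in a subspace S with orthogonal projection Q, and vectors s, w with Qs ≠ s: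
2⟨w, v − s⟩ − ‖s − v‖² ≤ ‖Qw‖² + ⟨w, (Qs − s)/‖Qs − s‖⟩². -/
theorem proj_chaining_bound
    {E : Type} [NormedAddCommGroup E] [InnerProductSpace ℝ E] [FiniteDimensional ℝ E]
    (S : Submodule ℝ E) (v s w : E) (hv : v ∈ S)
    (hs : ((S.orthogonalProjectionOnto s : E)) ≠ s) :
    2 * ⟪w, v - s⟫ - ‖s - v‖ ^ 2 ≤
      ‖(S.orthogonalProjectionOnto w : E)‖ ^ 2 +
        ⟪w, ‖(S.orthogonalProjectionOnto s : E) - s‖⁻¹ • ((S.orthogonalProjectionOnto s : E) - s)⟫ ^ 2 := by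
  set Qs : E := (S.orthogonalProjectionOnto s : E) with hQs
  set Qw : E := (S.orthogonalProjectionOnto w : E) with hQw
  set t : ℝ := ‖Qs - s‖ with ht
  have htpos : 0 < t := by
    simpa [ht] using sub_ne_zero.mpr hs
  have hmem : v - Qs ∈ S := Submodule.sub_mem S hv (S.orthogonalProjectionOnto s).2
  -- ⟪w, v - Qs⟫ = ⟪Qw, v - Qs⟫
  have h1 : ⟪w, v - Qs⟫ = ⟪Qw, v - Qs⟫ := by
    have hz : ⟪w - Qw, v - Qs⟫ = 0 :=
      S.starProjection_inner_eq_zero w (v - Qs) hmem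
    rw [inner_sub_left] at hz
    linarith
  -- orthogonality : ⟪s - Qs, v - Qs⟫ = 0
  have h2 : ⟪s - Qs, v - Qs⟫ = 0 :=
    S.starProjection_inner_eq_zero s (v - Qs) hmem
  -- Pythagoras : ‖s - v‖² = ‖v - Qs‖² + t²
  have h3 : ‖s - v‖ ^ 2 = ‖v - Qs‖ ^ 2 + t ^ 2 := by
    have : s - v = (s - Qs) - (v - Qs) := by abel
    rw [this, ht, ← norm_neg (Qs - s)]
    have hns : -(Qs - s) = s - Qs := by abel
    rw [hns, norm_sub_sq_real, h2]
    ring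
  -- decompose v - s
  have hdec : ⟪w, v - s⟫ = ⟪Qw, v - Qs⟫ + ⟪w, Qs - s⟫ := by
    have : v - s = (v - Qs) + (Qs - s) := by abel
    rw [this, inner_add_right, h1]
  -- inner with unit vector
  have h4 : ⟪w, t⁻¹ • (Qs - s)⟫ = t⁻¹ * ⟪w, Qs - s⟫ := real_inner_smul_right w _ _
  have h5 : ⟪w, Qs - s⟫ = t * ⟪w, t⁻¹ • (Qs - s)⟫ := by
    rw [h4]; field_simp
  -- bound term 1 : 2⟪Qw, a⟫ - ‖a‖² ≤ ‖Qw‖²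
  have h6 : (0:ℝ) ≤ ‖Qw - (v - Qs)‖ ^ 2 := sq_nonneg _
  have h7 : ‖Qw - (v - Qs)‖ ^ 2 = ‖Qw‖ ^ 2 - 2 * ⟪Qw, v - Qs⟫ + ‖v - Qs‖ ^ 2 :=
    norm_sub_sq_real _ _
  have h8 : (0:ℝ) ≤ (⟪w, t⁻¹ • (Qs - s)⟫ - t) ^ 2 := sq_nonneg _
  rw [hdec, h3, h5]
  nlinarith [h6, h7, h8, sq_nonneg (⟪w, t⁻¹ • (Qs - s)⟫ + t)]
end

section
/- Let φ₁,…,φ_m be an orthonormal basis (in L₂ of Lebesgue measure on [0,1]) for the space of piecewise polynomials of degree at most r−1 on a regular partition of [0,1] into K intervals (so m = rK). Then sup_{t∈[0,1]} ∑_{j=1}^m φ_j(t)² ≤ (2r−1)² K. -/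
open MeasureTheory

/-- Piecewise polynomials of degree at most r−1 on the regular partition of [0,1]
into K intervals (extended by zero outside [0,1)). -/
def PiecewisePoly (r K : ℕ) (v : ℝ → ℝ) : Prop :=
  (∀ j : Fin K, ∃ p : Polynomial ℝ, p.natDegree < r ∧
    ∀ t ∈ Set.Ico ((j : ℝ) / K) (((j : ℝ) + 1) / K), v t = Polynomial.eval t p) ∧
  ∀ t, t ∉ Set.Ico (0 : ℝ) 1 → v t = 0

open Polynomial Finset fwdDiff intervalIntegral


lemma bm_shift_deg (f : Polynomial ℝ) :
    (f.comp (X + C 1) - f).degree < f.degree ∨ f.comp (X + C 1) - f = 0 := by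
  by_cases hf0 : f = 0
  · right; simp [hf0]
  · left
    have hd1 : (X + C (1:ℝ)).natDegree = 1 := natDegree_X_add_C 1
    have h1 : (f.comp (X + C 1)).natDegree = f.natDegree := by
      rw [natDegree_comp, hd1, mul_one]
    have h2 : (f.comp (X + C 1)).leadingCoeff = f.leadingCoeff := by
      rw [leadingCoeff_comp (by rw [hd1]; exact one_ne_zero)]
      rw [show (X + C (1:ℝ)) = X + 1 by simp] at hd1 ⊢
      have h3 : (X + (1:ℝ[X])).leadingCoeff = 1 := Monic.leadingCoeff (by simpa using monic_X_add_C (1:ℝ))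
      rw [h3, one_pow, mul_one]
    have hc0 : f.comp (X + C 1) ≠ 0 := by
      intro h
      apply hf0
      rw [← leadingCoeff_eq_zero, ← h2, h, leadingCoeff_zero]
    have hdeq : (f.comp (X + C 1)).degree = f.degree := by
      rw [degree_eq_natDegree hc0, degree_eq_natDegree hf0, h1]
    have := degree_sub_lt hdeq hc0 h2
    rwa [hdeq] at this

lemma bm_fwdDiff_eval (f : Polynomial ℝ) :
    fwdDiff (1:ℝ) (fun x : ℝ => f.eval x) = fun x : ℝ => (f.comp (X + C 1) - f).eval x := by
  funext x
  simp [fwdDiff, eval_comp]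

lemma bm_fwdDiff_iter_zero (n : ℕ) (f : Polynomial ℝ) (hf : f.degree < n) :
    (fwdDiff (1:ℝ))^[n] (fun x : ℝ => f.eval x) = fun _ => 0 := by
  induction n generalizing f with
  | zero =>
    have : f = 0 := by
      rw [← degree_eq_bot]
      exact Nat.WithBot.lt_zero_iff.mp (by exact_mod_cast hf)
    simp [this]
  | succ n ih =>
    rw [Function.iterate_succ_apply, bm_fwdDiff_eval]
    apply ih
    rcases bm_shift_deg f with h | h
    · calc (f.comp (X + C 1) - f).degree < f.degree := h
        _ ≤ (n : WithBot ℕ) := by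
            rcases eq_or_ne f 0 with rfl | hf0
            · simp
            · rw [degree_eq_natDegree hf0] at hf ⊢
              exact_mod_cast Nat.lt_succ_iff.mp (by exact_mod_cast hf)
    · rw [h, degree_zero]; exact bot_lt_iff_ne_bot.mpr (by simp)

lemma bm_alt_sum (n : ℕ) (f : Polynomial ℝ) (hf : f.degree < n) :
    ∑ i ∈ Finset.range (n+1), (-1:ℝ)^i * (n.choose i : ℝ) * f.eval (i:ℝ) = 0 := by
  have h0 := fwdDiff_iter_eq_sum_shift (1:ℝ) (fun x : ℝ => f.eval x) n 0
  rw [bm_fwdDiff_iter_zero n f hf] at h0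
  simp only [zsmul_eq_mul, Int.cast_mul, Int.cast_pow, Int.cast_neg, Int.cast_one,
    Int.cast_natCast, zero_add, nsmul_eq_mul, mul_one] at h0
  have heq : ∑ i ∈ Finset.range (n+1), (-1:ℝ)^i * (n.choose i : ℝ) * f.eval (i:ℝ)
      = (-1:ℝ)^n * ∑ i ∈ Finset.range (n+1), (-1:ℝ)^(n-i) * (n.choose i : ℝ) * f.eval (i:ℝ) := by
    rw [Finset.mul_sum]
    refine Finset.sum_congr rfl fun i hi => ?_
    have hi' : i ≤ n := Nat.lt_succ_iff.mp (Finset.mem_range.mp hi)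
    have h1 : (-1:ℝ)^n = (-1)^(n-i)*(-1)^i := by rw [← pow_add, Nat.sub_add_cancel hi']
    have h2 : ((-1:ℝ))^(n-i) * ((-1:ℝ))^(n-i) = 1 := by
      rw [← pow_add]; exact Even.neg_one_pow ⟨n - i, rfl⟩
    rw [h1]
    linear_combination (-((n.choose i : ℝ) * f.eval (i:ℝ) * (-1:ℝ)^i)) * h2
  rw [heq, ← h0, mul_zero]

noncomputable def bmD (n k : ℕ) : ℝ := (-1)^k * n * ((n+k).choose k) * (n.choose (k+1))

lemma bm_prod_fact (n k : ℕ) : (∏ u ∈ Finset.range n, (k+1+u)) * k.factorial = (n+k).factorial := by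
  induction n with
  | zero => simp
  | succ n ih =>
    rw [Finset.prod_range_succ, mul_right_comm, ih]
    have h : n + 1 + k = (n + k) + 1 := by omega
    rw [h, Nat.factorial_succ]
    ring

lemma bm_prod_choose (n k : ℕ) :
    (∏ u ∈ Finset.range n, (k+1+u)) = n.factorial * ((n+k).choose k) := by
  have h2 := Nat.choose_mul_factorial_mul_factorial (Nat.le_add_left k n)
  have h3 : (n+k) - k = n := by omega
  rw [h3] at h2
  exact Nat.eq_of_mul_eq_mul_right (Nat.factorial_pos k)
    (by rw [bm_prod_fact n k, ← h2]; ring)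

lemma bm_prod_succ (m : ℕ) : ∏ v ∈ Finset.range m, (v+1) = m.factorial := by
  induction m with
  | zero => simp
  | succ m ih => rw [Finset.prod_range_succ, ih, Nat.factorial_succ]; ring

lemma bm_erase_zero_prod (n : ℕ) (hn : 1 ≤ n) :
    ∏ u ∈ (Finset.range n).erase 0, u = (n-1).factorial := by
  have himg : (Finset.range n).erase 0 = Finset.image Nat.succ (Finset.range (n-1)) := by
    ext u
    simp only [Finset.mem_erase, Finset.mem_image, Finset.mem_range]
    constructor
    · intro ⟨h0, hu⟩; exact ⟨u - 1, by omega, by omega⟩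
    · rintro ⟨v, hv, rfl⟩; omega
  rw [himg, Finset.prod_image (fun a _ b _ h => Nat.succ_injective h)]
  simpa [Nat.succ_eq_add_one] using bm_prod_succ (n-1)

lemma bm_moment (n j : ℕ) (hn : 1 ≤ n) (hj : j < n) :
    ∑ k ∈ Finset.range n, bmD n k / ((j:ℝ) + k + 1) = if j = 0 then 1 else 0 := by
  classical
  set A : Polynomial ℝ := ∏ u ∈ Finset.range n, (X + C (u:ℝ)) with hAdef
  set Qj : Polynomial ℝ := ∏ u ∈ (Finset.range n).erase j, (X + C (u:ℝ)) with hQdef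
  have hA : A = (X + C (j:ℝ)) * Qj :=
    (Finset.mul_prod_erase _ _ (Finset.mem_range.mpr hj)).symm
  have hAeval : ∀ k : ℕ, A.eval ((k:ℝ)+1) = (n.factorial : ℝ) * ((n+k).choose k) := by
    intro k
    rw [hAdef, Polynomial.eval_prod]
    have hterm : ∀ u ∈ Finset.range n,
        Polynomial.eval ((k:ℝ)+1) (X + C (u:ℝ)) = ((k+1+u : ℕ) : ℝ) := by
      intro u _; simp only [Polynomial.eval_add, Polynomial.eval_X, Polynomial.eval_C]; push_cast; ring
    rw [Finset.prod_congr rfl hterm, ← Nat.cast_prod, bm_prod_choose n k]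
    push_cast; ring
  have hfac : (n.factorial:ℝ) ≠ 0 := by positivity
  have key : ∀ k : ℕ, bmD n k / ((j:ℝ)+k+1)
      = ((n:ℝ) / n.factorial) * ((-1:ℝ)^k * (n.choose (k+1)) * Qj.eval ((k:ℝ)+1)) := by
    intro k
    have h1 : A.eval ((k:ℝ)+1) = ((k:ℝ)+1+(j:ℝ)) * Qj.eval ((k:ℝ)+1) := by rw [hA]; simp
    have h2 : (n.factorial:ℝ) * ((n+k).choose k) = ((k:ℝ)+1+(j:ℝ)) * Qj.eval ((k:ℝ)+1) := by
      rw [← hAeval k, h1]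
    have hne : ((j:ℝ)+k+1) ≠ 0 := by positivity
    have h3 : ((n+k).choose k : ℝ) / ((j:ℝ)+k+1) = Qj.eval ((k:ℝ)+1) / n.factorial := by
      rw [div_eq_div_iff hne hfac]
      linear_combination h2
    calc bmD n k / ((j:ℝ)+k+1)
        = ((-1:ℝ)^k * n * (n.choose (k+1))) * (((n+k).choose k : ℝ)/((j:ℝ)+k+1)) := by
          rw [bmD]; ring
      _ = _ := by rw [h3]; ring
  have hdeg : Qj.degree < n := by
    rw [hQdef, Polynomial.degree_prod]
    have : ∀ u ∈ (Finset.range n).erase j, (X + C (u:ℝ)).degree = 1 := by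
      intro u _; exact Polynomial.degree_X_add_C _
    rw [Finset.sum_congr rfl this, Finset.sum_const, Finset.card_erase_of_mem
      (Finset.mem_range.mpr hj), Finset.card_range]
    simp only [nsmul_eq_mul, mul_one]
    exact_mod_cast Nat.sub_lt (by omega) one_pos
  have halt := bm_alt_sum n Qj hdeg
  rw [Finset.sum_range_succ'] at halt
  have hT : ∑ k ∈ Finset.range n, (-1:ℝ)^k * (n.choose (k+1)) * Qj.eval ((k:ℝ)+1)
      = Qj.eval 0 := by
    have hneg : ∑ k ∈ Finset.range n, (-1:ℝ)^k * (n.choose (k+1)) * Qj.eval ((k:ℝ)+1)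
        = - ∑ i ∈ Finset.range n, (-1:ℝ)^(i+1) * (n.choose (i+1)) * Qj.eval (((i+1:ℕ)):ℝ) := by
      rw [← Finset.sum_neg_distrib]
      refine Finset.sum_congr rfl fun i _ => ?_
      push_cast; ring
    rw [hneg]
    have h0 : (-1:ℝ)^0 * (n.choose 0 : ℝ) * Qj.eval ((0:ℕ):ℝ) = Qj.eval 0 := by simp
    linarith [halt]
  rw [Finset.sum_congr rfl (fun k _ => key k), ← Finset.mul_sum, hT]
  have hQ0 : Qj.eval 0 = ∏ u ∈ (Finset.range n).erase j, (u:ℝ) := by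
    rw [hQdef, Polynomial.eval_prod]
    refine Finset.prod_congr rfl fun u _ => by simp
  by_cases hj0 : j = 0
  · subst hj0
    rw [if_pos rfl, hQ0, ← Nat.cast_prod, bm_erase_zero_prod n hn]
    have hfact : (n:ℝ) * ((n-1).factorial : ℝ) = (n.factorial : ℝ) := by
      exact_mod_cast congrArg (Nat.cast (R := ℝ)) (Nat.mul_factorial_pred (by omega))
    field_simp
    linarith [hfact]
  · rw [if_neg hj0, hQ0, Finset.prod_eq_zero (i := 0)
      (Finset.mem_erase.mpr ⟨Ne.symm hj0, Finset.mem_range.mpr (by omega)⟩) (by simp), mul_zero]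




noncomputable def bmQ (n : ℕ) : Polynomial ℝ := ∑ k ∈ Finset.range n, C (bmD n k) * X^k

lemma bm_Q_deg (n : ℕ) (hn : 1 ≤ n) : (bmQ n).natDegree < n := by
  have hmem : bmQ n ∈ Polynomial.degreeLT ℝ n := by
    refine Submodule.sum_mem _ fun k hk => ?_
    rw [Polynomial.mem_degreeLT]
    calc (C (bmD n k) * X^k).degree ≤ (C (bmD n k)).degree + (X^k : Polynomial ℝ).degree :=
          degree_mul_le _ _
      _ ≤ 0 + k := add_le_add degree_C_le (le_of_eq (degree_X_pow k))
      _ < n := by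
          rw [zero_add]
          exact_mod_cast Finset.mem_range.mp hk
  rcases eq_or_ne (bmQ n) 0 with h | h
  · rw [h, natDegree_zero]; omega
  · exact (Polynomial.natDegree_lt_iff_degree_lt h).mpr (Polynomial.mem_degreeLT.mp hmem)

lemma bm_Q_eval (n : ℕ) (x : ℝ) : (bmQ n).eval x = ∑ k ∈ Finset.range n, bmD n k * x^k := by
  rw [bmQ, Polynomial.eval_finset_sum]
  exact Finset.sum_congr rfl fun k _ => by simp

lemma bm_int_xj_Q (n j : ℕ) (hn : 1 ≤ n) (hj : j < n) :
    ∫ x in (0:ℝ)..1, x^j * (bmQ n).eval x = if j = 0 then 1 else 0 := by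
  have h1 : ∀ x : ℝ, x^j * (bmQ n).eval x = ∑ k ∈ Finset.range n, bmD n k * x^(j+k) := by
    intro x
    rw [bm_Q_eval, Finset.mul_sum]
    exact Finset.sum_congr rfl fun k _ => by ring
  rw [intervalIntegral.integral_congr (g := fun x => ∑ k ∈ Finset.range n, bmD n k * x^(j+k))
    (fun x _ => h1 x)]
  rw [intervalIntegral.integral_finset_sum (f := fun k x => bmD n k * x^(j+k)) (fun k _ =>
    ((continuous_const.mul (continuous_pow (j+k))).intervalIntegrable _ _))]
  rw [← bm_moment n j hn hj]
  refine Finset.sum_congr rfl fun k _ => ?_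
  rw [intervalIntegral.integral_const_mul, integral_pow]
  push_cast
  ring

lemma bm_int_p_Q (n : ℕ) (p : Polynomial ℝ) (hp : p.natDegree < n) :
    ∫ x in (0:ℝ)..1, p.eval x * (bmQ n).eval x = p.eval 0 := by
  have hn : 1 ≤ n := by omega
  have h1 : ∀ x : ℝ, p.eval x * (bmQ n).eval x
      = ∑ j ∈ Finset.range n, p.coeff j * (x^j * (bmQ n).eval x) := by
    intro x
    rw [Polynomial.eval_eq_sum_range' hp, Finset.sum_mul]
    exact Finset.sum_congr rfl fun j _ => by ring
  rw [intervalIntegral.integral_congr (g := fun x =>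
      ∑ j ∈ Finset.range n, p.coeff j * (x^j * (bmQ n).eval x)) (fun x _ => h1 x)]
  rw [intervalIntegral.integral_finset_sum (f := fun j x => p.coeff j * (x^j * (bmQ n).eval x))
    (fun j _ =>
    ((continuous_const.mul ((continuous_pow j).mul (bmQ n).continuous)).intervalIntegrable _ _))]
  have h2 : ∀ j ∈ Finset.range n, p.coeff j * (if j = 0 then (1:ℝ) else 0)
      = if j = 0 then p.coeff 0 else 0 := by
    intro j _
    by_cases h : j = 0 <;> simp [h]
  calc ∑ j ∈ Finset.range n, ∫ x in (0:ℝ)..1, p.coeff j * (x^j * (bmQ n).eval x)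
      = ∑ j ∈ Finset.range n, (if j = 0 then p.coeff 0 else 0) := by
        refine Finset.sum_congr rfl fun j hj => ?_
        rw [intervalIntegral.integral_const_mul, bm_int_xj_Q n j hn (Finset.mem_range.mp hj),
          h2 j hj]
    _ = p.coeff 0 := by
        rw [Finset.sum_ite_eq' (Finset.range n) 0 (fun _ => p.coeff 0),
          if_pos (Finset.mem_range.mpr (by omega : 0 < n))]
    _ = p.eval 0 := Polynomial.coeff_zero_eq_eval_zero p

lemma bm_int_Q_sq (n : ℕ) (hn : 1 ≤ n) :
    ∫ x in (0:ℝ)..1, ((bmQ n).eval x)^2 = (n:ℝ)^2 := by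
  have h1 : ∀ x : ℝ, ((bmQ n).eval x)^2 = (bmQ n).eval x * (bmQ n).eval x := fun x => sq _
  rw [intervalIntegral.integral_congr (g := fun x => (bmQ n).eval x * (bmQ n).eval x)
    (fun x _ => h1 x), bm_int_p_Q n (bmQ n) (bm_Q_deg n hn)]
  rw [bm_Q_eval]
  have : ∀ k ∈ Finset.range n, bmD n k * (0:ℝ)^k = if k = 0 then (n:ℝ)^2 else 0 := by
    intro k _
    by_cases h : k = 0
    · simp [h, bmD, Nat.choose_one_right]; ring
    · simp [zero_pow h, h]
  rw [Finset.sum_congr rfl this, Finset.sum_ite_eq' (Finset.range n) 0 (fun _ => (n:ℝ)^2),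
    if_pos (Finset.mem_range.mpr (by omega : 0 < n))]

lemma bm_endpoint (n : ℕ) (p : Polynomial ℝ) (hp : p.natDegree < n) :
    (p.eval 0)^2 ≤ (n:ℝ)^2 * ∫ x in (0:ℝ)..1, (p.eval x)^2 := by
  have hn : 1 ≤ n := by omega
  set a : ℝ := (n:ℝ)^2 with ha
  set b : ℝ := 2 * p.eval 0 with hb
  set c : ℝ := ∫ x in (0:ℝ)..1, (p.eval x)^2 with hc
  have hquad : ∀ lam : ℝ, 0 ≤ a * (lam * lam) + b * lam + c := by
    intro lam
    have hexp : ∫ s in (0:ℝ)..1, (lam * (bmQ n).eval s + p.eval s)^2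
        = a * (lam * lam) + b * lam + c := by
      have h1 : ∀ s : ℝ, (lam * (bmQ n).eval s + p.eval s)^2
          = (lam * lam) * ((bmQ n).eval s)^2 + (2 * lam) * (p.eval s * (bmQ n).eval s)
            + (p.eval s)^2 := fun s => by ring
      rw [intervalIntegral.integral_congr (g := fun s =>
        (lam * lam) * ((bmQ n).eval s)^2 + (2 * lam) * (p.eval s * (bmQ n).eval s)
          + (p.eval s)^2) (fun s _ => h1 s)]
      have hi1 : IntervalIntegrable (fun s : ℝ => (lam*lam) * ((bmQ n).eval s)^2) volume 0 1 :=
        (continuous_const.mul ((bmQ n).continuous.pow 2)).intervalIntegrable _ _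
      have hi2 : IntervalIntegrable (fun s : ℝ => (2*lam) * (p.eval s * (bmQ n).eval s)) volume 0 1 :=
        (continuous_const.mul (p.continuous.mul (bmQ n).continuous)).intervalIntegrable _ _
      have hi3 : IntervalIntegrable (fun s : ℝ => (p.eval s)^2) volume 0 1 :=
        (p.continuous.pow 2).intervalIntegrable _ _
      rw [intervalIntegral.integral_add (hi1.add hi2) hi3, intervalIntegral.integral_add hi1 hi2,
        intervalIntegral.integral_const_mul, intervalIntegral.integral_const_mul,
        bm_int_Q_sq n hn, bm_int_p_Q n p hp]
      ring
    rw [← hexp]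
    exact intervalIntegral.integral_nonneg (by norm_num) (fun s _ => sq_nonneg _)
  have hd := discrim_le_zero hquad
  rw [discrim] at hd
  rw [hb] at hd
  nlinarith [hd]

lemma bm_endpoint_scaled (n : ℕ) (p : Polynomial ℝ) (hp : p.natDegree < n) (t c : ℝ)
    (hc : c ≠ 0) :
    (p.eval t)^2 ≤ (n:ℝ)^2 * (c⁻¹ * ∫ x in t..(t+c), (p.eval x)^2) := by
  set q := p.comp (C c * X + C t) with hq
  have hqd : q.natDegree < n := by
    rw [hq, natDegree_comp, Polynomial.natDegree_linear hc, mul_one]; exact hp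
  have h0 : q.eval 0 = p.eval t := by simp [hq, eval_comp]
  have hmain := bm_endpoint n q hqd
  rw [h0] at hmain
  have hsub : ∫ x in (0:ℝ)..1, (q.eval x)^2 = c⁻¹ * ∫ x in t..(t+c), (p.eval x)^2 := by
    have h2 : ∀ x : ℝ, (q.eval x)^2 = (fun y => (p.eval y)^2) (c * x + t) := by
      intro x; simp [hq, eval_comp]
    rw [intervalIntegral.integral_congr (g := fun x => (fun y => (p.eval y)^2) (c * x + t))
      (fun x _ => h2 x)]
    rw [intervalIntegral.integral_comp_mul_add (fun y => (p.eval y)^2) hc t]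
    norm_num [smul_eq_mul, add_comm]
  rwa [hsub] at hmain

lemma bm_interval (r : ℕ) (hr : 1 ≤ r) (p : Polynomial ℝ) (hp : p.natDegree < r)
    (a b t : ℝ) (hab : a < b) (hta : a ≤ t) (htb : t ≤ b) :
    (p.eval t)^2 * (b - a) ≤ (2*(r:ℝ) - 1)^2 * ∫ x in a..b, (p.eval x)^2 := by
  have hint : IntervalIntegrable (fun x => (p.eval x)^2) volume a b :=
    (p.continuous.pow 2).intervalIntegrable _ _
  have hnonneg : (0:ℝ → ℝ) ≤ᵐ[volume.restrict (Set.Ioc a b)] fun x => (p.eval x)^2 :=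
    Filter.Eventually.of_forall fun x => sq_nonneg _
  rcases eq_or_lt_of_le hr with hr1 | hr2
  · -- r = 1 : p is constant
    have hdeg0 : p.natDegree = 0 := by omega
    obtain ⟨cc, rfl⟩ := Polynomial.natDegree_eq_zero.mp hdeg0
    rw [intervalIntegral.integral_congr (g := fun _ => cc^2) (fun x _ => by simp),
      intervalIntegral.integral_const]
    simp only [Polynomial.eval_C, smul_eq_mul]
    rw [← hr1]
    push_cast
    nlinarith [sq_nonneg cc]
  · have hr2' : (2:ℝ) ≤ (r:ℝ) := by exact_mod_cast hr2
    set c : ℝ := (b - a)/2 with hc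
    have hc0 : 0 < c := by rw [hc]; linarith
    have hba : b - a = 2 * c := by rw [hc]; ring
    by_cases hmid : t + c ≤ b
    · have h1 := bm_endpoint_scaled r p hp t c (ne_of_gt hc0)
      have hI1 : 0 ≤ ∫ x in t..(t+c), (p.eval x)^2 :=
        intervalIntegral.integral_nonneg (by linarith) (fun x _ => sq_nonneg _)
      have h2 : (∫ x in t..(t+c), (p.eval x)^2) ≤ ∫ x in a..b, (p.eval x)^2 :=
        intervalIntegral.integral_mono_interval hta (by linarith) hmid hnonneg hint
      have hI : 0 ≤ ∫ x in a..b, (p.eval x)^2 := le_trans hI1 h2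
      have key : (p.eval t)^2 * (b - a) ≤ 2 * (r:ℝ)^2 * ∫ x in t..(t+c), (p.eval x)^2 := by
        rw [hba]
        calc (p.eval t)^2 * (2*c)
            ≤ ((r:ℝ)^2 * (c⁻¹ * ∫ x in t..(t+c), (p.eval x)^2)) * (2*c) :=
              mul_le_mul_of_nonneg_right h1 (by linarith)
          _ = 2 * (r:ℝ)^2 * ∫ x in t..(t+c), (p.eval x)^2 := by
              field_simp
      calc (p.eval t)^2 * (b - a) ≤ 2 * (r:ℝ)^2 * ∫ x in t..(t+c), (p.eval x)^2 := key
        _ ≤ 2 * (r:ℝ)^2 * ∫ x in a..b, (p.eval x)^2 :=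
            mul_le_mul_of_nonneg_left h2 (by positivity)
        _ ≤ (2*(r:ℝ) - 1)^2 * ∫ x in a..b, (p.eval x)^2 :=
            mul_le_mul_of_nonneg_right (by nlinarith [hr2']) hI
    · have h1 := bm_endpoint_scaled r p hp t (-c) (by intro h; linarith [neg_eq_zero.mp h])
      have hflip : (-c)⁻¹ * ∫ x in t..(t+(-c)), (p.eval x)^2
          = c⁻¹ * ∫ x in (t-c)..t, (p.eval x)^2 := by
        have : t + (-c) = t - c := by ring
        rw [this, intervalIntegral.integral_symm]
        field_simp
      rw [hflip] at h1
      have hI1 : 0 ≤ ∫ x in (t-c)..t, (p.eval x)^2 :=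
        intervalIntegral.integral_nonneg (by linarith) (fun x _ => sq_nonneg _)
      have h2 : (∫ x in (t-c)..t, (p.eval x)^2) ≤ ∫ x in a..b, (p.eval x)^2 :=
        intervalIntegral.integral_mono_interval (by push_neg at hmid; linarith)
          (by linarith) htb hnonneg hint
      have hI : 0 ≤ ∫ x in a..b, (p.eval x)^2 := le_trans hI1 h2
      have key : (p.eval t)^2 * (b - a) ≤ 2 * (r:ℝ)^2 * ∫ x in (t-c)..t, (p.eval x)^2 := by
        rw [hba]
        calc (p.eval t)^2 * (2*c)
            ≤ ((r:ℝ)^2 * (c⁻¹ * ∫ x in (t-c)..t, (p.eval x)^2)) * (2*c) :=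
              mul_le_mul_of_nonneg_right h1 (by linarith)
          _ = 2 * (r:ℝ)^2 * ∫ x in (t-c)..t, (p.eval x)^2 := by
              field_simp
      calc (p.eval t)^2 * (b - a) ≤ 2 * (r:ℝ)^2 * ∫ x in (t-c)..t, (p.eval x)^2 := key
        _ ≤ 2 * (r:ℝ)^2 * ∫ x in a..b, (p.eval x)^2 :=
            mul_le_mul_of_nonneg_left h2 (by positivity)
        _ ≤ (2*(r:ℝ) - 1)^2 * ∫ x in a..b, (p.eval x)^2 :=
            mul_le_mul_of_nonneg_right (by nlinarith [hr2']) hI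

-- helper: interval membership determines the floor
lemma bm_floor_eq (K : ℕ) (hK : 0 < K) (l : ℕ) (s : ℝ)
    (hs : s ∈ Set.Ico ((l:ℝ)/K) (((l:ℝ)+1)/K)) : l = ⌊s * K⌋₊ := by
  obtain ⟨h1, h2⟩ := hs
  have hK0 : (0:ℝ) < K := by exact_mod_cast hK
  have hl : (l:ℝ) ≤ s * K := by
    rw [div_le_iff₀ hK0] at h1; linarith
  have hu : s * K < (l:ℝ) + 1 := by
    rw [lt_div_iff₀ hK0] at h2; linarith
  have hs0 : 0 ≤ s * K := le_trans (by positivity) hl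
  symm
  rw [Nat.floor_eq_iff hs0]
  exact ⟨hl, by exact_mod_cast hu⟩

lemma bm_mem_own (K : ℕ) (hK : 0 < K) (s : ℝ) (hs : s ∈ Set.Ico (0:ℝ) 1) :
    s ∈ Set.Ico ((⌊s * K⌋₊:ℝ)/K) (((⌊s * K⌋₊:ℝ)+1)/K) := by
  obtain ⟨h0, h1⟩ := hs
  have hK0 : (0:ℝ) < K := by exact_mod_cast hK
  have hs0 : 0 ≤ s * K := by positivity
  constructor
  · rw [div_le_iff₀ hK0]
    exact Nat.floor_le hs0
  · rw [lt_div_iff₀ hK0]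
    exact Nat.lt_floor_add_one (s * K)

lemma bm_floor_lt (K : ℕ) (hK : 0 < K) (s : ℝ) (hs : s ∈ Set.Ico (0:ℝ) 1) :
    ⌊s * K⌋₊ < K := by
  have hK0 : (0:ℝ) < K := by exact_mod_cast hK
  rw [Nat.floor_lt (mul_nonneg hs.1 (le_of_lt hK0))]
  nlinarith [hs.1, hs.2]

lemma bm_Ico_sub (K : ℕ) (hK : 0 < K) (l : ℕ) (hl : l < K) :
    Set.Ico ((l:ℝ)/K) (((l:ℝ)+1)/K) ⊆ Set.Ico (0:ℝ) 1 := by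
  have hK0 : (0:ℝ) < K := by exact_mod_cast hK
  intro s hs
  obtain ⟨h1, h2⟩ := hs
  constructor
  · exact le_trans (by positivity) h1
  · have : ((l:ℝ)+1)/K ≤ 1 := by
      rw [div_le_one hK0]
      exact_mod_cast hl
    linarith

lemma bm_integrableOn (r K : ℕ) (hK : 0 < K) (f g : ℝ → ℝ)
    (hf : PiecewisePoly r K f) (hg : PiecewisePoly r K g) :
    IntegrableOn (fun s => f s * g s) (Set.Icc (0:ℝ) 1) volume := by
  choose pf hpf hpfe using hf.1
  choose pg hpg hpge using hg.1
  have hcov : Set.Icc (0:ℝ) 1 ⊆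
      (⋃ l : Fin K, Set.Ico (((l:ℕ):ℝ)/K) ((((l:ℕ):ℝ)+1)/K)) ∪ {1} := by
    intro s hs
    rcases eq_or_lt_of_le hs.2 with h1 | h1
    · right; simp [h1]
    · left
      have hs' : s ∈ Set.Ico (0:ℝ) 1 := ⟨hs.1, h1⟩
      exact Set.mem_iUnion.mpr ⟨⟨⌊s*K⌋₊, bm_floor_lt K hK s hs'⟩, bm_mem_own K hK s hs'⟩
  have hpiece : ∀ l : Fin K,
      IntegrableOn (fun s => f s * g s) (Set.Ico (((l:ℕ):ℝ)/K) ((((l:ℕ):ℝ)+1)/K)) volume := by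
    intro l
    have hbase : IntegrableOn (fun s => (pf l).eval s * (pg l).eval s)
        (Set.Ico (((l:ℕ):ℝ)/K) ((((l:ℕ):ℝ)+1)/K)) volume :=
      (((pf l).continuous.mul (pg l).continuous).integrableOn_Icc).mono_set
        Set.Ico_subset_Icc_self
    refine IntegrableOn.congr_fun hbase ?_ measurableSet_Ico
    intro s hs
    show eval s (pf l) * eval s (pg l) = f s * g s
    rw [hpfe l s hs, hpge l s hs]
  have hone : IntegrableOn (fun s => f s * g s) ({1} : Set ℝ) volume := by
    have h0 : volume.restrict ({1} : Set ℝ) = 0 := by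
      rw [Measure.restrict_eq_zero]; exact measure_singleton 1
    unfold IntegrableOn
    rw [h0]
    exact integrable_zero_measure
  exact ((integrableOn_finite_iUnion.mpr hpiece).union hone).mono_set hcov

/-- Birgé–Massart bound: for an orthonormal basis φ₁,…,φ_m (m = rK) of the space of
piecewise polynomials of degree ≤ r−1 on the regular partition of [0,1] into K pieces,
sup_{t∈[0,1]} ∑ⱼ φⱼ(t)² ≤ (2r−1)² K. -/
theorem orthonormal_basis_sup_bound (r K m : ℕ) (hr : 0 < r) (hK : 0 < K)
    (hm : m = r * K) (φ : Fin m → ℝ → ℝ)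
    (hpp : ∀ j, PiecewisePoly r K (φ j))
    (hortho : ∀ i j : Fin m,
      (∫ t in Set.Icc (0 : ℝ) 1, φ i t * φ j t) = if i = j then 1 else 0) :
    ∀ t ∈ Set.Icc (0 : ℝ) 1, (∑ j, φ j t ^ 2) ≤ ((2 * r - 1 : ℝ)) ^ 2 * K := by
  intro t ht
  have hK0 : (0:ℝ) < K := by exact_mod_cast hK
  have hr1 : (1:ℝ) ≤ r := by exact_mod_cast hr
  have hRHS0 : (0:ℝ) ≤ ((2 * r - 1 : ℝ)) ^ 2 * K := by positivity
  rcases eq_or_lt_of_le ht.2 with h1 | h1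
  · -- t = 1
    have hz : ∀ j, φ j t = 0 := fun j => (hpp j).2 t (by rw [h1]; simp)
    calc ∑ j, φ j t ^ 2 = 0 := by simp [hz]
      _ ≤ _ := hRHS0
  · have ht01 : t ∈ Set.Ico (0:ℝ) 1 := ⟨ht.1, h1⟩
    have hkK : ⌊t * K⌋₊ < K := bm_floor_lt K hK t ht01
    set k : ℕ := ⌊t * K⌋₊ with hkdef
    set lo : ℝ := (k:ℝ)/K with hlo
    set hi : ℝ := ((k:ℝ)+1)/K with hhi
    have htmem : t ∈ Set.Ico lo hi := bm_mem_own K hK t ht01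
    have hlohi : lo < hi := by
      rw [hlo, hhi, div_lt_div_iff_of_pos_right hK0]
      linarith
    choose pp hdeg hev using fun i => (hpp i).1
    set l0 : Fin K := ⟨k, hkK⟩ with hl0
    have hev' : ∀ i : Fin m, ∀ s ∈ Set.Ico lo hi, φ i s = (pp i l0).eval s := by
      intro i s hs
      exact hev i l0 s hs
    set S : ℝ := ∑ j, φ j t ^ 2 with hS
    have hS0 : 0 ≤ S := Finset.sum_nonneg fun j _ => sq_nonneg _
    set v : ℝ → ℝ := fun s => ∑ j, φ j t * φ j s with hv
    set P : Polynomial ℝ := ∑ i, Polynomial.C (φ i t) * pp i l0 with hP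
    have hvP : ∀ s ∈ Set.Ico lo hi, v s = P.eval s := by
      intro s hs
      rw [hv, hP]
      simp only [Polynomial.eval_finset_sum, Polynomial.eval_mul, Polynomial.eval_C]
      exact Finset.sum_congr rfl fun i _ => by rw [hev' i s hs]
    have hPt : P.eval t = S := by
      rw [hS, hP]
      simp only [Polynomial.eval_finset_sum, Polynomial.eval_mul, Polynomial.eval_C]
      exact Finset.sum_congr rfl fun i _ => by rw [← hev' i t htmem]; ring
    have hPdeg : P.natDegree < r := by
      have hmem : P ∈ Polynomial.degreeLT ℝ r := by
        refine Submodule.sum_mem _ fun i _ => ?_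
        rw [Polynomial.mem_degreeLT]
        calc (Polynomial.C (φ i t) * pp i l0).degree
            ≤ (Polynomial.C (φ i t)).degree + (pp i l0).degree := Polynomial.degree_mul_le _ _
          _ ≤ 0 + (pp i l0).degree := add_le_add Polynomial.degree_C_le le_rfl
          _ = (pp i l0).degree := zero_add _
          _ ≤ ((pp i l0).natDegree : WithBot ℕ) := Polynomial.degree_le_natDegree
          _ < (r : WithBot ℕ) := by exact_mod_cast hdeg i l0
      rcases eq_or_ne P 0 with h | h
      · rw [h, Polynomial.natDegree_zero]; omega
      · exact (Polynomial.natDegree_lt_iff_degree_lt h).mpr (Polynomial.mem_degreeLT.mp hmem)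
    have hInt : ∀ i j : Fin m,
        IntegrableOn (fun s => φ i s * φ j s) (Set.Icc (0:ℝ) 1) volume :=
      fun i j => bm_integrableOn r K hK _ _ (hpp i) (hpp j)
    have hv2 : ∀ s, (v s)^2 = ∑ i, ∑ j, (φ i t * φ j t) * (φ i s * φ j s) := by
      intro s
      rw [hv, sq, Finset.sum_mul_sum]
      exact Finset.sum_congr rfl fun i _ => Finset.sum_congr rfl fun j _ => by ring
    have hv2int : IntegrableOn (fun s => (v s)^2) (Set.Icc (0:ℝ) 1) volume := by
      rw [show (fun s => (v s)^2)
          = fun s => ∑ i, ∑ j, (φ i t * φ j t) * (φ i s * φ j s) from funext hv2]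
      refine integrable_finset_sum _ fun i _ => integrable_finset_sum _ fun j _ => ?_
      exact (hInt i j).const_mul _
    have hJ : ∫ s in Set.Icc (0:ℝ) 1, (v s)^2 = S := by
      simp only [hv2]
      rw [integral_finset_sum _ (fun i _ =>
        integrable_finset_sum _ (fun j _ => (hInt i j).const_mul _))]
      have hinner : ∀ i : Fin m, (∫ s in Set.Icc (0:ℝ) 1,
          ∑ j, (φ i t * φ j t) * (φ i s * φ j s)) = φ i t ^ 2 := by
        intro i
        rw [integral_finset_sum _ (fun j _ => (hInt i j).const_mul _)]
        have hterm : ∀ j : Fin m, (∫ s in Set.Icc (0:ℝ) 1,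
            (φ i t * φ j t) * (φ i s * φ j s)) = if i = j then φ i t * φ j t else 0 := by
          intro j
          rw [MeasureTheory.integral_const_mul, hortho i j]
          by_cases h : i = j <;> simp [h]
        rw [Finset.sum_congr rfl fun j _ => hterm j, Finset.sum_ite_eq]
        simp [sq]
      rw [Finset.sum_congr rfl fun i _ => hinner i]
    have hsub : Set.Ico lo hi ⊆ Set.Icc (0:ℝ) 1 :=
      (bm_Ico_sub K hK k hkK).trans Set.Ico_subset_Icc_self
    have hmono : ∫ s in Set.Ico lo hi, (v s)^2 ≤ S := by
      rw [← hJ]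
      exact MeasureTheory.setIntegral_mono_set hv2int
        (Filter.Eventually.of_forall fun s => sq_nonneg _)
        (HasSubset.Subset.eventuallyLE hsub)
    have hIco : ∫ s in Set.Ico lo hi, (v s)^2 = ∫ x in lo..hi, (P.eval x)^2 := by
      rw [MeasureTheory.setIntegral_congr_fun measurableSet_Ico
        (fun s hs => by rw [hvP s hs])]
      rw [show (volume : Measure ℝ).restrict (Set.Ico lo hi)
          = (volume : Measure ℝ).restrict (Set.Ioc lo hi) from
          MeasureTheory.restrict_Ico_eq_restrict_Ioc,
        ← intervalIntegral.integral_of_le (le_of_lt hlohi)]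
    have hkey := bm_interval r hr P hPdeg lo hi t hlohi htmem.1 (le_of_lt htmem.2)
    rw [hPt] at hkey
    have hdiff : hi - lo = 1/K := by
      rw [hhi, hlo, div_sub_div_same]
      ring_nf
    rw [hdiff] at hkey
    have hchain : S^2 * (1/K) ≤ (2*(r:ℝ)-1)^2 * S := by
      refine le_trans hkey (mul_le_mul_of_nonneg_left ?_ (by positivity))
      rw [← hIco]
      exact hmono
    have hgoal : S ≤ (2*(r:ℝ)-1)^2 * K := by
      rcases eq_or_lt_of_le hS0 with h0 | h0
      · rw [← h0]; positivity
      · have h2 : S * S ≤ S * ((2*(r:ℝ)-1)^2 * K) := by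
          have h3 := mul_le_mul_of_nonneg_right hchain (le_of_lt hK0)
          have hKK : (1/(K:ℝ)) * K = 1 := by field_simp
          nlinarith [h3]
        exact le_of_mul_le_mul_left h2 h0
    exact hgoal
end
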